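/- arXiv:2405.15094 — 2 statements merged into one kernel-verified Lean document; each statement's English description precedes it below -/
import Mathlib

section
/- Rank-one pseudoinverse derivative: let X ∈ ℝ^{n×n} and u ≠ v with χ = e_v - e_u in the row space of X. Then the derivative of the pseudoinverse map at X in the direction e_u χᵀ is d/dε|_{ε=0} (X + ε e_u χᵀ)⁺ = X⁺ (Xᵀ)⁺ χ e_uᵀ (I - X X⁺) - X⁺ e_u χᵀ X⁺. -/
open Matrix BigOperators Filter

def IsMoorePenrose {n : ℕ} (L P : Matrix (Fin n) (Fin n) ℝ) : Prop :=
  L * P * L = L ∧ P * L * P = P ∧ (L * P)ᵀ = L * P ∧ (P * L)ᵀ = P * L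

variable {n : ℕ}

lemma vmv_mul (x y : Fin n → ℝ) (M : Matrix (Fin n) (Fin n) ℝ) :
    vecMulVec x y * M = vecMulVec x (y ᵥ* M) := by
  ext i j
  simp [vecMulVec_apply, mul_apply, vecMul, dotProduct, Finset.mul_sum, mul_assoc]

lemma mul_vmv (M : Matrix (Fin n) (Fin n) ℝ) (x y : Fin n → ℝ) :
    M * vecMulVec x y = vecMulVec (M *ᵥ x) y := by
  ext i j
  simp only [vecMulVec_apply, mul_apply, mulVec, dotProduct, Finset.sum_mul]
  exact Finset.sum_congr rfl fun k _ => by ring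

lemma vecMul_vmv (y z w : Fin n → ℝ) : y ᵥ* vecMulVec z w = (y ⬝ᵥ z) • w := by
  ext j
  simp only [vecMul, dotProduct, vecMulVec_apply, Pi.smul_apply, smul_eq_mul, Finset.sum_mul]
  exact Finset.sum_congr rfl fun k _ => by ring

lemma vmv_mulVec (x y z : Fin n → ℝ) : vecMulVec x y *ᵥ z = (y ⬝ᵥ z) • x := by
  ext i
  simp only [mulVec, dotProduct, vecMulVec_apply, Pi.smul_apply, smul_eq_mul, Finset.mul_sum]
  rw [Finset.sum_mul]
  exact Finset.sum_congr rfl fun j _ => by ring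

lemma vmv_vmv (x y z w : Fin n → ℝ) :
    vecMulVec x y * vecMulVec z w = (y ⬝ᵥ z) • vecMulVec x w := by
  rw [vmv_mul, vecMul_vmv]
  ext i j; simp [vecMulVec_apply]; ring

lemma vmv_smul_right (x : Fin n → ℝ) (a : ℝ) (y : Fin n → ℝ) :
    vecMulVec x (a • y) = a • vecMulVec x y := by
  ext i j; simp [vecMulVec_apply]; ring

lemma vmv_smul_left (a : ℝ) (x y : Fin n → ℝ) :
    vecMulVec (a • x) y = a • vecMulVec x y := by
  ext i j; simp [vecMulVec_apply]; ring

lemma sub_vmv (x y z : Fin n → ℝ) :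
    vecMulVec (x - y) z = vecMulVec x z - vecMulVec y z := by
  ext i j; simp [vecMulVec_apply]; ring

lemma vmv_sub (x y z : Fin n → ℝ) :
    vecMulVec x (y - z) = vecMulVec x y - vecMulVec x z := by
  ext i j; simp [vecMulVec_apply]; ring

lemma vmv_zero (x : Fin n → ℝ) : vecMulVec x (0 : Fin n → ℝ) = 0 := by
  ext i j; simp [vecMulVec_apply]

lemma zero_vmv (y : Fin n → ℝ) : vecMulVec (0 : Fin n → ℝ) y = 0 := by
  ext i j; simp [vecMulVec_apply]

lemma vmv_transpose (x y : Fin n → ℝ) : (vecMulVec x y)ᵀ = vecMulVec y x := by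
  ext i j; simp [vecMulVec_apply]; ring

lemma mp_unique {L P₁ P₂ : Matrix (Fin n) (Fin n) ℝ}
    (H1 : IsMoorePenrose L P₁) (H2 : IsMoorePenrose L P₂) : P₁ = P₂ := by
  obtain ⟨a1, b1, c1, d1⟩ := H1
  obtain ⟨a2, b2, c2, d2⟩ := H2
  have e1 : L * P₁ = L * P₂ := by
    calc L * P₁ = L * P₂ * (L * P₁) := by rw [← mul_assoc, a2]
    _ = (L * P₂)ᵀ * (L * P₁)ᵀ := by rw [c2, c1]
    _ = (L * P₁ * L * P₂)ᵀ := by simp only [transpose_mul]; noncomm_ring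
    _ = (L * P₂)ᵀ := by rw [a1]
    _ = L * P₂ := c2
  have e2 : P₁ * L = P₂ * L := by
    calc P₁ * L = P₁ * L * (P₂ * L) := by rw [mul_assoc, ← mul_assoc L, a2]
    _ = (P₁ * L)ᵀ * (P₂ * L)ᵀ := by rw [d1, d2]
    _ = (P₂ * (L * P₁ * L))ᵀ := by simp only [transpose_mul]; noncomm_ring
    _ = (P₂ * L)ᵀ := by rw [a1]
    _ = P₂ * L := d2
  calc P₁ = P₁ * L * P₁ := b1.symm
  _ = P₁ * (L * P₂) := by rw [mul_assoc, e1]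
  _ = P₂ * L * P₂ := by rw [← mul_assoc, e2]
  _ = P₂ := b2

lemma mp_formula (A P : Matrix (Fin n) (Fin n) ℝ) (c d k h m w : Fin n → ℝ)
    (α lam mu β γ ε : ℝ)
    (h1 : A * P * A = A) (h2 : P * A * P = P)
    (h3 : (A * P)ᵀ = A * P) (h4 : (P * A)ᵀ = P * A)
    (hd : d ᵥ* (P * A) = d)
    (hk : k = P *ᵥ c) (hh : h = d ᵥ* P) (hm : m = P *ᵥ h)
    (hw : w = c - c ᵥ* (A * P))
    (hα : α = d ⬝ᵥ k) (hlam : lam = c ⬝ᵥ w) (hmu : mu = h ⬝ᵥ h)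
    (hβ : β = 1 + ε * α) (hγ : γ = β ^ 2 + ε ^ 2 * lam * mu) (hγ0 : γ ≠ 0) :
    IsMoorePenrose (A + ε • vecMulVec c d)
      (P + (ε / γ) • (β • vecMulVec m w - (ε * mu) • vecMulVec k w
        - (ε * lam) • vecMulVec m h - β • vecMulVec k h)) := by
  -- derived identities
  have iwA : w ᵥ* A = 0 := by
    rw [hw, Matrix.sub_vecMul, Matrix.vecMul_vecMul, mul_assoc, ← mul_assoc A P A, h1, sub_self]
  have ihA : h ᵥ* A = d := by rw [hh, Matrix.vecMul_vecMul, hd]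
  have ihc : h ⬝ᵥ c = α := by
    rw [hα, hk, Matrix.dotProduct_mulVec, hh]
  have iwc : w ⬝ᵥ c = lam := by rw [hlam, dotProduct_comm]
  have idm : d ⬝ᵥ m = mu := by
    rw [hm, Matrix.dotProduct_mulVec, ← hh, hmu]
  have idk : d ⬝ᵥ k = α := hα.symm
  have hAPc : (A * P) *ᵥ c = c ᵥ* (A * P) := by
    rw [← Matrix.vecMul_transpose, h3]
  have iAk : A *ᵥ k = c - w := by
    rw [hk, Matrix.mulVec_mulVec, hAPc, hw, sub_sub_cancel]
  have hdcol : (P * A) *ᵥ d = d := by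
    rw [← Matrix.vecMul_transpose, h4, hd]
  have iAm : A *ᵥ m = h := by
    have hAPPT : A * P * Pᵀ = Pᵀ := by
      calc A * P * Pᵀ = (A * P)ᵀ * Pᵀ := by rw [h3]
      _ = (P * (A * P))ᵀ := by rw [← transpose_mul]
      _ = (P * A * P)ᵀ := by rw [← mul_assoc]
      _ = Pᵀ := by rw [h2]
    rw [hm, hh, ← Matrix.mulVec_transpose, Matrix.mulVec_mulVec, Matrix.mulVec_mulVec, hAPPT]
  have iPAm : (P * A) *ᵥ m = m := by
    rw [hm, Matrix.mulVec_mulVec, h2]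
  have iPAk : (P * A) *ᵥ k = k := by
    rw [hk, Matrix.mulVec_mulVec, h2]
  -- key computations
  subst hβ hγ
  set B := A + ε • vecMulVec c d with hB
  set T := (1 + ε * α) • vecMulVec m w - (ε * mu) • vecMulVec k w
      - (ε * lam) • vecMulVec m h - (1 + ε * α) • vecMulVec k h with hT
  set Q := P + (ε / ((1 + ε * α) ^ 2 + ε ^ 2 * lam * mu)) • T with hQdef
  have S1 : Q * B = P * A := by
    rw [hQdef, hT, hB]
    simp only [mul_add, add_mul, sub_mul, mul_sub, smul_mul_assoc, mul_smul_comm, smul_smul,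
      vmv_mul, mul_vmv, vmv_vmv, vmv_mulVec, vmv_smul_left, vmv_smul_right,
      iwA, ihA, iwc, ihc, ← hk, vmv_zero, smul_zero]
    match_scalars <;> field_simp <;> ring
  have S2 : B * Q = A * P + (ε / ((1 + ε * α) ^ 2 + ε ^ 2 * lam * mu)) •
      ((1 + ε * α) • vecMulVec h w - (ε * lam) • vecMulVec h h
        + (ε * mu) • vecMulVec w w + (1 + ε * α) • vecMulVec w h) := by
    rw [hQdef, hT, hB]
    simp only [mul_add, add_mul, sub_mul, mul_sub, smul_mul_assoc, mul_smul_comm, smul_smul,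
      vmv_mul, mul_vmv, vmv_vmv, vmv_mulVec, vmv_smul_left, vmv_smul_right,
      iAm, iAk, idm, idk, sub_vmv, ← hh, smul_sub]
    match_scalars <;> field_simp <;> ring
  refine ⟨?_, ?_, ?_, ?_⟩
  · rw [mul_assoc, S1, hB, add_mul, smul_mul_assoc, vmv_mul, hd, ← mul_assoc, h1]
  · rw [S1]
    rw [hQdef, hT]
    simp only [mul_add, mul_sub, mul_smul_comm, mul_vmv, iPAm, iPAk, h2]
  · rw [S2]
    simp only [transpose_add, transpose_smul, transpose_sub, h3, vmv_transpose]
    module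
  · rw [S1, h4]

/-- Derivative of the Moore-Penrose pseudoinverse at X in the rank-one direction e_u χᵀ,
for χ = e_v - e_u in the row space of X. -/
theorem pinv_rank_one_derivative {n : ℕ} (X P : Matrix (Fin n) (Fin n) ℝ) (u v : Fin n)
    (huv : u ≠ v)
    (Pinv : ℝ → Matrix (Fin n) (Fin n) ℝ)
    (hrow : ∃ w : Fin n → ℝ,
      Matrix.vecMul w X = (Pi.single v (1:ℝ) - Pi.single u 1 : Fin n → ℝ))
    (hP : IsMoorePenrose X P)
    (hPinv : ∀ ε : ℝ, IsMoorePenrose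
        (X + ε • vecMulVec (Pi.single u (1:ℝ)) (Pi.single v (1:ℝ) - Pi.single u 1))
        (Pinv ε))
    (hPinv0 : Pinv 0 = P) :
    Filter.Tendsto (fun ε : ℝ => ε⁻¹ • (Pinv ε - P)) (nhdsWithin 0 {0}ᶜ)
      (nhds (P * Pᵀ * vecMulVec (Pi.single v (1:ℝ) - Pi.single u 1) (Pi.single u 1)
              * (1 - X * P)
            - P * vecMulVec (Pi.single u (1:ℝ)) (Pi.single v (1:ℝ) - Pi.single u 1) * P)) := by
  obtain ⟨w0, hw0⟩ := hrow
  obtain ⟨h1, h2, h3, h4⟩ := hP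
  set c : Fin n → ℝ := Pi.single u 1 with hc
  set dd : Fin n → ℝ := Pi.single v 1 - Pi.single u 1 with hddv
  have hd : dd ᵥ* (P * X) = dd := by
    rw [← hw0, Matrix.vecMul_vecMul, ← mul_assoc, h1]
  set k := P *ᵥ c with hk
  set h := dd ᵥ* P with hh
  set m := P *ᵥ h with hm
  set w := c - c ᵥ* (X * P) with hwv
  set α := dd ⬝ᵥ k with hα
  set lam := c ⬝ᵥ w with hlam
  set mu := h ⬝ᵥ h with hmu
  have hne : ∀ᶠ ε : ℝ in nhds 0, (1 + ε * α) ^ 2 + ε ^ 2 * lam * mu ≠ 0 := by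
    have hcont : Continuous fun ε : ℝ => (1 + ε * α) ^ 2 + ε ^ 2 * lam * mu := by fun_prop
    apply (hcont.continuousAt (x := 0)).eventually_ne
    norm_num
  have hQ : ∀ ε : ℝ, ((1 + ε * α) ^ 2 + ε ^ 2 * lam * mu) ≠ 0 →
      Pinv ε = P + (ε / ((1 + ε * α) ^ 2 + ε ^ 2 * lam * mu)) •
        ((1 + ε * α) • vecMulVec m w - (ε * mu) • vecMulVec k w
          - (ε * lam) • vecMulVec m h - (1 + ε * α) • vecMulVec k h) :=
    fun ε hγ0 => mp_unique (hPinv ε)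
      (mp_formula X P c dd k h m w α lam mu (1 + ε * α) _ ε h1 h2 h3 h4 hd hk hh hm hwv
        hα hlam hmu rfl rfl hγ0)
  have htgt : P * Pᵀ * vecMulVec dd c * (1 - X * P) - P * vecMulVec c dd * P
      = vecMulVec m w - vecMulVec k h := by
    have e1 : (P * Pᵀ) *ᵥ dd = m := by
      rw [← Matrix.mulVec_mulVec, Matrix.mulVec_transpose, ← hh, hm]
    have e2 : c ᵥ* (1 - X * P) = w := by
      rw [Matrix.vecMul_sub, Matrix.vecMul_one, hwv]
    rw [mul_vmv, vmv_mul, mul_vmv, vmv_mul, e1, e2, ← hk, ← hh]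
  set F : ℝ → Matrix (Fin n) (Fin n) ℝ := fun ε =>
    ((1 + ε * α) ^ 2 + ε ^ 2 * lam * mu)⁻¹ •
      ((1 + ε * α) • vecMulVec m w - (ε * mu) • vecMulVec k w
        - (ε * lam) • vecMulVec m h - (1 + ε * α) • vecMulVec k h) with hF
  have hFcont : ContinuousAt F 0 := by
    apply ContinuousAt.fun_smul
    · exact ((by fun_prop : Continuous fun ε : ℝ =>
        (1 + ε * α) ^ 2 + ε ^ 2 * lam * mu).continuousAt).inv₀ (by norm_num)
    · fun_prop
  have hF0 : F 0 = vecMulVec m w - vecMulVec k h := by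
    simp [hF]
  have hlim : Tendsto F (nhdsWithin 0 {0}ᶜ) (nhds (vecMulVec m w - vecMulVec k h)) := by
    rw [← hF0]
    exact hFcont.tendsto.mono_left nhdsWithin_le_nhds
  rw [htgt]
  apply Filter.Tendsto.congr' _ hlim
  filter_upwards [hne.filter_mono nhdsWithin_le_nhds, self_mem_nhdsWithin] with ε hγ0 hε
  have hε0 : ε ≠ 0 := hε
  rw [hQ ε hγ0, add_sub_cancel_left, smul_smul, hF]
  congr 1
  field_simp
end

section
/- For a random walk on a connected undirected graph G (transition probabilities M_{uv} = 1/deg(u) for neighbors), the commute time c(u,v) = h(u,v) + h(v,u) is symmetric in u and v and is proportional to the effective resistance: c(u,v) = 2|E| · χ_{uv}ᵀ Z χ_{uv}, where Z is the Moore-Penrose pseudoinverse of the combinatorial Laplacian of G and χ_{uv} = e_u - e_v. -/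
open Matrix BigOperators Filter

/-- Commute time of simple random walk on a connected graph is symmetric and equals
2|E| times the effective resistance. -/
theorem commute_time_eq_resistance {n : ℕ} (G : SimpleGraph (Fin n)) [DecidableRel G.Adj]
    (hconn : G.Connected)
    (h Z : Matrix (Fin n) (Fin n) ℝ)
    (hZ : IsMoorePenrose (G.lapMatrix ℝ) Z)
    (hdiag : ∀ v, h v v = 0)
    (hrec : ∀ u v, u ≠ v →
      h u v = 1 + ∑ w, (if G.Adj u w then ((G.degree u : ℝ))⁻¹ else 0) * h w v) :
    ∀ u v,
      (h u v + h v u = h v u + h u v) ∧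
      h u v + h v u = 2 * (G.edgeFinset.card : ℝ) *
        dotProduct (Pi.single u (1:ℝ) - Pi.single v 1)
          (Z.mulVec (Pi.single u (1:ℝ) - Pi.single v 1)) := by
  obtain ⟨hLZL, hZLZ, hLZsym, hZLsym⟩ := hZ
  intro u v
  refine ⟨add_comm _ _, ?_⟩
  by_cases huv : u = v
  · subst huv
    simp [hdiag]
  have hvu : v ≠ u := fun hh => huv hh.symm
  -- every vertex has positive degree
  have hdegpos : ∀ x : Fin n, 0 < G.degree x := by
    intro x
    rw [G.degree_pos_iff_exists_adj]
    obtain ⟨y, hy⟩ : ∃ y : Fin n, y ≠ x := by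
      by_cases hx : x = u
      · exact ⟨v, by simp [hx, hvu]⟩
      · exact ⟨u, fun hh => hx hh.symm⟩
    obtain ⟨p⟩ := hconn.preconnected x y
    cases p with
    | nil => exact absurd rfl hy
    | cons hadj _ => exact ⟨_, hadj⟩
  set m2 : ℝ := 2 * (G.edgeFinset.card : ℝ) with hm2
  have hm2pos : (0:ℝ) < m2 := by
    have h1 : 0 < ∑ x, G.degree x :=
      Finset.sum_pos' (fun _ _ => Nat.zero_le _) ⟨u, Finset.mem_univ u, hdegpos u⟩
    rw [G.sum_degrees_eq_twice_card_edges] at h1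
    rw [hm2]
    exact_mod_cast h1
  have hm2ne : m2 ≠ 0 := ne_of_gt hm2pos
  -- off-diagonal value of L applied to hitting-time vector
  have key : ∀ t x : Fin n, x ≠ t →
      ((G.lapMatrix ℝ) *ᵥ (fun w => h w t)) x = G.degree x := by
    intro t x hxt
    rw [SimpleGraph.lapMatrix_mulVec_apply]
    have hd : (G.degree x : ℝ) ≠ 0 := Nat.cast_ne_zero.mpr (hdegpos x).ne'
    have hr := hrec x t hxt
    have hsum : ∑ w, (if G.Adj x w then ((G.degree x : ℝ))⁻¹ else 0) * h w t
        = (G.degree x : ℝ)⁻¹ * ∑ w ∈ G.neighborFinset x, h w t := by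
      rw [Finset.mul_sum, SimpleGraph.neighborFinset_eq_filter, Finset.sum_filter]
      refine Finset.sum_congr rfl (fun w _ => ?_)
      split <;> simp
    rw [hsum] at hr
    rw [hr]
    field_simp
    ring
  -- column sums of L are zero, hence the total sum of L *ᵥ f vanishes
  have hcol : ∀ w : Fin n, ∑ x, (G.lapMatrix ℝ) x w = 0 := by
    intro w
    have hrow := congrFun (G.lapMatrix_mulVec_const_eq_zero (R := ℝ)) w
    simp only [Matrix.mulVec, dotProduct, mul_one, Pi.zero_apply] at hrow
    rw [← hrow]
    refine Finset.sum_congr rfl fun x _ => ?_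
    have := congrFun (congrFun (G.isSymm_lapMatrix (R := ℝ)) x) w
    rw [Matrix.transpose_apply] at this
    exact this.symm
  have hsumL : ∀ f : Fin n → ℝ, ∑ x, ((G.lapMatrix ℝ) *ᵥ f) x = 0 := by
    intro f
    calc ∑ x, ((G.lapMatrix ℝ) *ᵥ f) x
        = ∑ w, (∑ x, (G.lapMatrix ℝ) x w) * f w := by
          simp only [Matrix.mulVec, dotProduct, Finset.sum_mul]
          exact Finset.sum_comm
      _ = 0 := by simp [hcol]
  -- diagonal value
  have keyt : ∀ t : Fin n, ((G.lapMatrix ℝ) *ᵥ (fun w => h w t)) t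
      = (G.degree t : ℝ) - m2 := by
    intro t
    have h0 := hsumL (fun w => h w t)
    rw [← Finset.add_sum_erase _ _ (Finset.mem_univ t)] at h0
    have he : ∑ x ∈ Finset.univ.erase t, ((G.lapMatrix ℝ) *ᵥ fun w => h w t) x
        = ∑ x ∈ Finset.univ.erase t, (G.degree x : ℝ) :=
      Finset.sum_congr rfl fun x hx => key t x (Finset.ne_of_mem_erase hx)
    rw [he] at h0
    have hc : ∑ x : Fin n, (G.degree x : ℝ) = m2 := by
      rw [hm2]
      exact_mod_cast congrArg (Nat.cast (R := ℝ)) G.sum_degrees_eq_twice_card_edges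
    rw [← Finset.add_sum_erase _ _ (Finset.mem_univ t)] at hc
    linarith
  -- the potential function
  set χ : Fin n → ℝ := Pi.single u (1:ℝ) - Pi.single v 1 with hχ
  set φ : Fin n → ℝ := fun x => h x v - h x u with hφ
  have hχu : χ u = 1 := by simp [hχ, Pi.single_apply, huv]
  have hχv : χ v = -1 := by simp [hχ, Pi.single_apply, hvu]
  have hχo : ∀ x, x ≠ u → x ≠ v → χ x = 0 := by
    intro x hxu hxv
    simp [hχ, Pi.single_apply, hxu, hxv]
  have hLphi : (G.lapMatrix ℝ) *ᵥ φ = m2 • χ := by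
    have hsub : (G.lapMatrix ℝ) *ᵥ φ
        = ((G.lapMatrix ℝ) *ᵥ fun w => h w v) - ((G.lapMatrix ℝ) *ᵥ fun w => h w u) := by
      rw [← Matrix.mulVec_sub]
      rfl
    funext x
    rw [hsub]
    rw [Pi.sub_apply, Pi.smul_apply, smul_eq_mul]
    by_cases hxu : x = u
    · subst hxu
      rw [key v x huv, keyt x, hχu]
      ring
    · by_cases hxv : x = v
      · subst hxv
        rw [keyt x, key u x hxu, hχv]
        ring
      · rw [key v x hxv, key u x hxu, hχo x hxu hxv]
        ring
  have hχψ : χ = m2⁻¹ • ((G.lapMatrix ℝ) *ᵥ φ) := by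
    rw [hLphi, smul_smul, inv_mul_cancel₀ hm2ne, one_smul]
  have hvec : φ ᵥ* (G.lapMatrix ℝ) = (G.lapMatrix ℝ) *ᵥ φ := by
    have := Matrix.vecMul_transpose (G.lapMatrix ℝ) φ
    rwa [G.isSymm_lapMatrix (R := ℝ)] at this
  have hψZψ : ((G.lapMatrix ℝ) *ᵥ φ) ⬝ᵥ Z *ᵥ ((G.lapMatrix ℝ) *ᵥ φ)
      = ((G.lapMatrix ℝ) *ᵥ φ) ⬝ᵥ φ := by
    rw [Matrix.mulVec_mulVec, Matrix.dotProduct_mulVec, ← hvec, Matrix.vecMul_vecMul,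
      ← mul_assoc, hLZL, hvec]
  have hχφ : χ ⬝ᵥ φ = h u v + h v u := by
    rw [hχ, sub_dotProduct, single_dotProduct, single_dotProduct, hφ]
    simp [hdiag]
  have hψφ : ((G.lapMatrix ℝ) *ᵥ φ) ⬝ᵥ φ = m2 * (h u v + h v u) := by
    rw [hLphi, smul_dotProduct, hχφ, smul_eq_mul]
  have hfinal : χ ⬝ᵥ Z *ᵥ χ = m2⁻¹ * (h u v + h v u) := by
    conv_lhs => rw [hχψ]
    rw [smul_dotProduct, Matrix.mulVec_smul, dotProduct_smul,
      hψZψ, hψφ, smul_eq_mul, smul_eq_mul]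
    field_simp
  show h u v + h v u = m2 * (χ ⬝ᵥ Z *ᵥ χ)
  rw [hfinal]
  field_simp
end
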